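/- Let M be a nonnegative real square matrix indexed by Fin s₁ ⊕ Fin s₂ with s₁, s₂ ≥ 1, partitioned into four blocks with square diagonal blocks. Let B be the 2×2 matrix whose (i,j) entry b_{ij} is the maximum row sum within block (i,j) of M. Then ρ(M) ≤ tr(B)/2 + √((tr(B)/2)² − det(B)). -/

import Mathlib

open Matrix

/-- Spectral radius of a real square matrix: the maximum of the moduli of its
complex eigenvalues (elements of the spectrum of the matrix over `ℂ`). -/
noncomputable def specRad {n : Type*} [Fintype n] [DecidableEq n]
    (M : Matrix n n ℝ) : ℝ :=
  sSup ((‖·‖) '' spectrum ℂ (M.map (algebraMap ℝ ℂ)))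

lemma aux_bound (a b00 b01 b10 b11 α β : ℝ)
    (hb01 : 0 ≤ b01) (hb10 : 0 ≤ b10)
    (hα : 0 ≤ α) (hβ : 0 ≤ β) (hne : 0 < α ∨ 0 < β)
    (h1 : a * α ≤ b00 * α + b01 * β)
    (h2 : a * β ≤ b10 * α + b11 * β) :
    a ≤ (b00 + b11) / 2 + Real.sqrt (((b00 + b11) / 2) ^ 2 - (b00 * b11 - b01 * b10)) := by
  have hD0 : 0 ≤ ((b00 + b11) / 2) ^ 2 - (b00 * b11 - b01 * b10) := by
    nlinarith [sq_nonneg (b00 - b11), mul_nonneg hb01 hb10]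
  obtain ⟨s, hs⟩ : ∃ s, s = Real.sqrt (((b00 + b11) / 2) ^ 2 - (b00 * b11 - b01 * b10)) :=
    ⟨_, rfl⟩
  rw [← hs]
  have hs0 : 0 ≤ s := hs ▸ Real.sqrt_nonneg _
  have hss : s * s = ((b00 + b11) / 2) ^ 2 - (b00 * b11 - b01 * b10) := by
    rw [hs]; exact Real.mul_self_sqrt hD0
  have habs : |(b00 - b11) / 2| ≤ s := by
    rw [hs, ← Real.sqrt_sq_eq_abs]
    exact Real.sqrt_le_sqrt (by nlinarith [mul_nonneg hb01 hb10])
  obtain ⟨hl, hu⟩ := abs_le.mp habs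
  by_contra hcon
  push_neg at hcon
  have ha00 : b00 < a := by linarith
  have ha11 : b11 < a := by linarith
  have hαpos : 0 < α := by
    rcases hne with h | h
    · exact h
    · rcases eq_or_lt_of_le hα with h0 | h0
      · exfalso; rw [← h0] at h2; simp at h2; nlinarith
      · exact h0
  have hβpos : 0 < β := by
    rcases eq_or_lt_of_le hβ with h0 | h0
    · exfalso; rw [← h0] at h1; simp at h1; nlinarith
    · exact h0
  have hkey : (a - b00) * (a - b11) ≤ b01 * b10 := by
    have hm : ((a - b00) * α) * ((a - b11) * β) ≤ (b01 * β) * (b10 * α) := by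
      apply mul_le_mul (by linarith) (by linarith)
        (mul_nonneg (by linarith) hβ) (mul_nonneg hb01 hβ)
    have hαβ : 0 < α * β := mul_pos hαpos hβpos
    nlinarith
  have h5 : s < a - (b00 + b11) / 2 := by linarith
  nlinarith

/-- Upper bound on the spectral radius from a `2 × 2` upward row sum
contraction: if `B` is the `2 × 2` matrix of maximum block row sums of the
nonnegative matrix `M` (square diagonal blocks), then
`ρ(M) ≤ tr(B)/2 + √((tr(B)/2)² − det B)`. -/
theorem specRad_le_twoByTwo_upwardContraction
    {s₁ s₂ : ℕ} (hs₁ : 1 ≤ s₁) (hs₂ : 1 ≤ s₂)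
    (M : Matrix (Fin s₁ ⊕ Fin s₂) (Fin s₁ ⊕ Fin s₂) ℝ)
    (hM : ∀ p q, 0 ≤ M p q)
    (B : Matrix (Fin 2) (Fin 2) ℝ)
    (hB00 : B 0 0 = Finset.univ.sup'
      (Finset.univ_nonempty_iff.mpr (Fin.pos_iff_nonempty.mp hs₁))
      (fun u : Fin s₁ => ∑ v : Fin s₁, M (Sum.inl u) (Sum.inl v)))
    (hB01 : B 0 1 = Finset.univ.sup'
      (Finset.univ_nonempty_iff.mpr (Fin.pos_iff_nonempty.mp hs₁))
      (fun u : Fin s₁ => ∑ v : Fin s₂, M (Sum.inl u) (Sum.inr v)))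
    (hB10 : B 1 0 = Finset.univ.sup'
      (Finset.univ_nonempty_iff.mpr (Fin.pos_iff_nonempty.mp hs₂))
      (fun u : Fin s₂ => ∑ v : Fin s₁, M (Sum.inr u) (Sum.inl v)))
    (hB11 : B 1 1 = Finset.univ.sup'
      (Finset.univ_nonempty_iff.mpr (Fin.pos_iff_nonempty.mp hs₂))
      (fun u : Fin s₂ => ∑ v : Fin s₂, M (Sum.inr u) (Sum.inr v))) :
    specRad M ≤ B.trace / 2 + Real.sqrt ((B.trace / 2) ^ 2 - B.det) := by
  have hne₁ : (Finset.univ : Finset (Fin s₁)).Nonempty :=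
    Finset.univ_nonempty_iff.mpr (Fin.pos_iff_nonempty.mp hs₁)
  have hne₂ : (Finset.univ : Finset (Fin s₂)).Nonempty :=
    Finset.univ_nonempty_iff.mpr (Fin.pos_iff_nonempty.mp hs₂)
  have hB00nn : 0 ≤ B 0 0 := by
    rw [hB00]
    exact Finset.le_sup'_of_le _ (Finset.mem_univ (⟨0, hs₁⟩ : Fin s₁))
      (Finset.sum_nonneg fun v _ => hM _ _)
  have hB01nn : 0 ≤ B 0 1 := by
    rw [hB01]
    exact Finset.le_sup'_of_le _ (Finset.mem_univ (⟨0, hs₁⟩ : Fin s₁))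
      (Finset.sum_nonneg fun v _ => hM _ _)
  have hB10nn : 0 ≤ B 1 0 := by
    rw [hB10]
    exact Finset.le_sup'_of_le _ (Finset.mem_univ (⟨0, hs₂⟩ : Fin s₂))
      (Finset.sum_nonneg fun v _ => hM _ _)
  have hB11nn : 0 ≤ B 1 1 := by
    rw [hB11]
    exact Finset.le_sup'_of_le _ (Finset.mem_univ (⟨0, hs₂⟩ : Fin s₂))
      (Finset.sum_nonneg fun v _ => hM _ _)
  have htr : B.trace = B 0 0 + B 1 1 := Matrix.trace_fin_two B
  have hdet : B.det = B 0 0 * B 1 1 - B 0 1 * B 1 0 := Matrix.det_fin_two B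
  have hr0 : 0 ≤ B.trace / 2 + Real.sqrt ((B.trace / 2) ^ 2 - B.det) := by
    have h := Real.sqrt_nonneg ((B.trace / 2) ^ 2 - B.det)
    rw [htr] at *; linarith
  apply Real.sSup_le _ hr0
  rintro _ ⟨z, hz, rfl⟩
  set A := M.map (algebraMap ℝ ℂ) with hA
  have hnu : ¬IsUnit (algebraMap ℂ (Matrix (Fin s₁ ⊕ Fin s₂) (Fin s₁ ⊕ Fin s₂) ℂ) z - A) :=
    spectrum.mem_iff.mp hz
  have hdet0 : (algebraMap ℂ (Matrix (Fin s₁ ⊕ Fin s₂) (Fin s₁ ⊕ Fin s₂) ℂ) z - A).det = 0 := by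
    by_contra h
    exact hnu ((Matrix.isUnit_iff_isUnit_det _).mpr (isUnit_iff_ne_zero.mpr h))
  obtain ⟨x, hx0, hxe⟩ := (Matrix.exists_mulVec_eq_zero_iff).mpr hdet0
  have hAx : A *ᵥ x = z • x := by
    have h1 : (algebraMap ℂ (Matrix (Fin s₁ ⊕ Fin s₂) (Fin s₁ ⊕ Fin s₂) ℂ) z - A) *ᵥ x
        = algebraMap ℂ _ z *ᵥ x - A *ᵥ x := Matrix.sub_mulVec _ _ _
    have h2 : (algebraMap ℂ (Matrix (Fin s₁ ⊕ Fin s₂) (Fin s₁ ⊕ Fin s₂) ℂ) z) *ᵥ x = z • x := by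
      rw [Algebra.algebraMap_eq_smul_one, Matrix.smul_mulVec, Matrix.one_mulVec]
    rw [h1, h2] at hxe
    linear_combination (norm := module) -hxe
  -- block max values
  set α := Finset.univ.sup' hne₁ (fun u : Fin s₁ => ‖x (Sum.inl u)‖) with hα
  set β := Finset.univ.sup' hne₂ (fun u : Fin s₂ => ‖x (Sum.inr u)‖) with hβ
  have hαnn : 0 ≤ α :=
    Finset.le_sup'_of_le _ (Finset.mem_univ (⟨0, hs₁⟩ : Fin s₁)) (norm_nonneg _)
  have hβnn : 0 ≤ β :=
    Finset.le_sup'_of_le _ (Finset.mem_univ (⟨0, hs₂⟩ : Fin s₂)) (norm_nonneg _)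
  -- general row bound
  have hbound : ∀ p : Fin s₁ ⊕ Fin s₂,
      ‖(A *ᵥ x) p‖ ≤
        (∑ v : Fin s₁, M p (Sum.inl v)) * α + (∑ v : Fin s₂, M p (Sum.inr v)) * β := by
    intro p
    have h1 : ‖(A *ᵥ x) p‖ ≤ ∑ q, M p q * ‖x q‖ := by
      rw [Matrix.mulVec, dotProduct]
      refine le_trans (norm_sum_le _ _) (le_of_eq ?_)
      refine Finset.sum_congr rfl fun q _ => ?_
      rw [norm_mul]
      congr 1
      simp [hA, Matrix.map_apply, Complex.norm_real, Real.norm_eq_abs, abs_of_nonneg (hM p q)]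
    refine le_trans h1 ?_
    rw [Fintype.sum_sum_type, Finset.sum_mul, Finset.sum_mul]
    refine add_le_add (Finset.sum_le_sum fun v _ => ?_) (Finset.sum_le_sum fun v _ => ?_)
    · exact mul_le_mul_of_nonneg_left
        (Finset.le_sup' (fun u : Fin s₁ => ‖x (Sum.inl u)‖) (Finset.mem_univ v))
        (hM _ _)
    · exact mul_le_mul_of_nonneg_left
        (Finset.le_sup' (fun u : Fin s₂ => ‖x (Sum.inr u)‖) (Finset.mem_univ v))
        (hM _ _)
  -- the two key inequalities
  obtain ⟨u₀, -, hu₀⟩ := Finset.exists_mem_eq_sup' hne₁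
    (fun u : Fin s₁ => ‖x (Sum.inl u)‖)
  obtain ⟨w₀, -, hw₀⟩ := Finset.exists_mem_eq_sup' hne₂
    (fun u : Fin s₂ => ‖x (Sum.inr u)‖)
  have key1 : ‖z‖ * α ≤ B 0 0 * α + B 0 1 * β := by
    have h := hbound (Sum.inl u₀)
    have he : ‖(A *ᵥ x) (Sum.inl u₀)‖ = ‖z‖ * α := by
      rw [hAx, hα, hu₀]
      simp [Pi.smul_apply, smul_eq_mul, _root_.map_mul]
    rw [he] at h
    refine le_trans h ?_
    gcongr
    · rw [hB00]
      exact Finset.le_sup' (fun u : Fin s₁ => ∑ v : Fin s₁, M (Sum.inl u) (Sum.inl v))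
        (Finset.mem_univ u₀)
    · rw [hB01]
      exact Finset.le_sup' (fun u : Fin s₁ => ∑ v : Fin s₂, M (Sum.inl u) (Sum.inr v))
        (Finset.mem_univ u₀)
  have key2 : ‖z‖ * β ≤ B 1 0 * α + B 1 1 * β := by
    have h := hbound (Sum.inr w₀)
    have he : ‖(A *ᵥ x) (Sum.inr w₀)‖ = ‖z‖ * β := by
      rw [hAx, hβ, hw₀]
      simp [Pi.smul_apply, smul_eq_mul, _root_.map_mul]
    rw [he] at h
    refine le_trans h ?_
    gcongr
    · rw [hB10]
      exact Finset.le_sup' (fun u : Fin s₂ => ∑ v : Fin s₁, M (Sum.inr u) (Sum.inl v))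
        (Finset.mem_univ w₀)
    · rw [hB11]
      exact Finset.le_sup' (fun u : Fin s₂ => ∑ v : Fin s₂, M (Sum.inr u) (Sum.inr v))
        (Finset.mem_univ w₀)
  have hnz : 0 < α ∨ 0 < β := by
    obtain ⟨p, hp⟩ := Function.ne_iff.mp hx0
    have hp' : 0 < ‖x p‖ := by simpa [norm_pos_iff] using hp
    cases p with
    | inl u => exact Or.inl (lt_of_lt_of_le hp'
        (Finset.le_sup' (fun u : Fin s₁ => ‖x (Sum.inl u)‖) (Finset.mem_univ u)))
    | inr w => exact Or.inr (lt_of_lt_of_le hp'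
        (Finset.le_sup' (fun u : Fin s₂ => ‖x (Sum.inr u)‖) (Finset.mem_univ w)))
  have := aux_bound (‖z‖) (B 0 0) (B 0 1) (B 1 0) (B 1 1) α β
    hB01nn hB10nn hαnn hβnn hnz key1 key2
  rw [htr, hdet]
  exact this
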